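/- Let Γ be a nonempty graph and t, x ≥ 0 integers. If F is a Γ-intersecting family of graphs on {1,...,n}, then the family F(t+x, t+2x) of graphs G on {1,...,(t+2x)n} for which at least t+x of the t+2x block-projections G_i belong to F, is Γ_t-intersecting, where Γ_t denotes t vertex-disjoint copies of Γ. -/

import Mathlib

/-- The embedding of the `i`-th block of `n` vertices into `{1,…,b·n}`. -/
def blockEmb (n b : ℕ) (i : Fin b) (v : Fin n) : Fin (b * n) :=
  ⟨i.1 * n + v.1, lt_of_lt_of_le
    (by have := v.2; rw [Nat.succ_mul]; omega : i.1 * n + v.1 < (i.1 + 1) * n)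
    (Nat.mul_le_mul_right n i.2)⟩

/-- The `i`-th block projection of a graph on `{1,…,b·n}`, relabeled to `{1,…,n}`. -/
def blockProj {n b : ℕ} (G : SimpleGraph (Fin (b * n))) (i : Fin b) :
    SimpleGraph (Fin n) where
  Adj u v := G.Adj (blockEmb n b i u) (blockEmb n b i v)
  symm := ⟨by intro u v h; exact G.adj_symm h⟩
  loopless := ⟨by intro u h; exact G.irrefl h⟩

/-- The family `F(a,b)` of graphs on `{1,…,b·n}` at least `a` of whose `b` block
projections lie in `F`. -/
def blockFamily {n : ℕ} (F : Set (SimpleGraph (Fin n))) (a b : ℕ) :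
    Set (SimpleGraph (Fin (b * n))) :=
  {G | a ≤ {i : Fin b | blockProj G i ∈ F}.ncard}

/-- `G` contains a copy of `Γ`. -/
def ContainsCopy {α β : Type*} (Γ : SimpleGraph α) (G : SimpleGraph β) : Prop :=
  ∃ f : α ↪ β, ∀ a b, Γ.Adj a b → G.Adj (f a) (f b)

/-- `t` vertex-disjoint copies of `Γ`. -/
def disjointUnion {α : Type*} (Γ : SimpleGraph α) (t : ℕ) : SimpleGraph (α × Fin t) where
  Adj x y := x.2 = y.2 ∧ Γ.Adj x.1 y.1
  symm := ⟨by intro x y h; exact ⟨h.1.symm, Γ.adj_symm h.2⟩⟩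
  loopless := ⟨by intro x h; exact Γ.irrefl h.2⟩

lemma blockEmb_eq_iff {n b : ℕ} {i i' : Fin b} {u u' : Fin n}
    (h : blockEmb n b i u = blockEmb n b i' u') : i = i' ∧ u = u' := by
  have hv : i.1 * n + u.1 = i'.1 * n + u'.1 := congrArg Fin.val h
  have hn : 0 < n := u.pos
  have hi : i.1 = i'.1 := by
    have h1 : (i.1 * n + u.1) / n = i.1 := by
      rw [Nat.mul_comm, Nat.mul_add_div hn, Nat.div_eq_of_lt u.2, Nat.add_zero]
    have h2 : (i'.1 * n + u'.1) / n = i'.1 := by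
      rw [Nat.mul_comm, Nat.mul_add_div hn, Nat.div_eq_of_lt u'.2, Nat.add_zero]
    rw [← h1, ← h2, hv]
  refine ⟨Fin.ext hi, Fin.ext ?_⟩
  rw [hi] at hv
  omega

/-- If `F` is `Γ`-intersecting, then `F(t+x, t+2x)` is `Γ_t`-intersecting. -/
theorem blockFamily_gamma_t_intersecting {α : Type*} (Γ : SimpleGraph α)
    (hΓ : Γ.edgeSet.Nonempty) (t x n : ℕ)
    (F : Set (SimpleGraph (Fin n)))
    (hF : ∀ G ∈ F, ∀ H ∈ F, ContainsCopy Γ (G ⊓ H)) :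
    ∀ G ∈ blockFamily F (t + x) (t + 2 * x), ∀ H ∈ blockFamily F (t + x) (t + 2 * x),
      ContainsCopy (disjointUnion Γ t) (G ⊓ H) := by
  intro G hG H hH
  classical
  let b := t + 2 * x
  set A : Set (Fin b) := {i | blockProj G i ∈ F} with hAdef
  set B : Set (Fin b) := {i | blockProj H i ∈ F} with hBdef
  have hA : t + x ≤ A.ncard := hG
  have hB : t + x ≤ B.ncard := hH
  have hfin : (A ∩ B).Finite := Set.toFinite _
  have hAB : t ≤ (A ∩ B).ncard := by
    have h1 := Set.ncard_inter_add_ncard_union A B (Set.toFinite A) (Set.toFinite B)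
    have h2 : (A ∪ B).ncard ≤ b := by
      have := Set.ncard_le_ncard (Set.subset_univ (A ∪ B)) Set.finite_univ
      simpa [Set.ncard_univ] using this
    omega
  have hcard : t ≤ hfin.toFinset.card := by
    rwa [Set.ncard_eq_toFinset_card _ hfin] at hAB
  obtain ⟨T, hT, hTcard⟩ := Finset.exists_subset_card_eq hcard
  let σ : Fin t ≃ {x // x ∈ T} := (Finset.equivFinOfCardEq hTcard).symm
  have hmem : ∀ j : Fin t, ((σ j : Fin b)) ∈ A ∩ B := fun j =>
    hfin.mem_toFinset.mp (hT (σ j).2)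
  have key : ∀ j : Fin t, ∃ f : α ↪ Fin n, ∀ a a', Γ.Adj a a' →
      (G ⊓ H).Adj (blockEmb n b (σ j) (f a)) (blockEmb n b (σ j) (f a')) := by
    intro j
    obtain ⟨f, hf⟩ := hF _ (hmem j).1 _ (hmem j).2
    exact ⟨f, fun a a' h => hf a a' h⟩
  choose f hfspec using key
  refine ⟨⟨fun p => blockEmb n b (σ p.2) (f p.2 p.1), ?_⟩, ?_⟩
  · rintro ⟨a, j⟩ ⟨a', j'⟩ h
    obtain ⟨hij, hu⟩ := blockEmb_eq_iff h
    have hjj : j = j' := by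
      apply σ.injective
      exact Subtype.ext hij
    subst hjj
    have : a = a' := (f j).injective hu
    simp [this]
  · rintro ⟨a, j⟩ ⟨a', j'⟩ ⟨hj, hadj⟩
    dsimp at hj ⊢
    subst hj
    exact hfspec j a a' hadj
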